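/- Let f : ℝ → ℝ be monotone increasing and convex, n a natural number, and a b : Fin n → ℝ both monotone increasing. Suppose σ is a permutation of Fin n with σ ≠ id such that there exist indices i < j with σ(i) > σ(j). Define σ' = σ composed with the transposition of i and j (so σ'(i) = σ(j), σ'(j) = σ(i), and σ'(k) = σ(k) otherwise). Then ∑ k, f(|a(σ'(k)) - b(k)|) ≤ ∑ k, f(|a(σ(k)) - b(k)|). -/

import Mathlib

private lemma gconv {f : ℝ → ℝ} (hmono : Monotone f)
    (hconv : ConvexOn ℝ Set.univ f) {s t : ℝ} (hs : 0 ≤ s) (ht : 0 ≤ t)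
    (hst : s + t = 1) (x y : ℝ) :
    f |s * x + t * y| ≤ s * f |x| + t * f |y| := by
  have h1 : |s * x + t * y| ≤ s * |x| + t * |y| := by
    calc |s * x + t * y| ≤ |s * x| + |t * y| := abs_add_le _ _
    _ = s * |x| + t * |y| := by
      rw [abs_mul, abs_mul, abs_of_nonneg hs, abs_of_nonneg ht]
  calc f |s * x + t * y| ≤ f (s * |x| + t * |y|) := hmono h1
  _ ≤ s * f |x| + t * f |y| := by
    have := hconv.2 (Set.mem_univ |x|) (Set.mem_univ |y|) hs ht hst
    simpa using this

private lemma slide {f : ℝ → ℝ} (hmono : Monotone f)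
    (hconv : ConvexOn ℝ Set.univ f) {m x M : ℝ} (hmx : m ≤ x) (hxM : x ≤ M) :
    f |x| + f |m + M - x| ≤ f |m| + f |M| := by
  rcases eq_or_lt_of_le (hmx.trans hxM) with h | h
  · have h1 : x = m := le_antisymm (h ▸ hxM) hmx
    have h2 : M = m := h.symm
    subst h1 h2
    simp
  · set t : ℝ := (x - m) / (M - m) with ht
    have hMm : (0:ℝ) < M - m := by linarith
    have ht0 : 0 ≤ t := div_nonneg (by linarith) hMm.le
    have ht1 : t ≤ 1 := by
      rw [ht, div_le_one hMm]; linarith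
    have hsum : t + (1 - t) = 1 := by ring
    have hx : x = t * M + (1 - t) * m := by
      rw [ht]; field_simp [hMm.ne']; ring
    have hy : m + M - x = (1 - t) * M + t * m := by
      rw [ht]; field_simp [hMm.ne']; ring
    have A := gconv hmono hconv ht0 (by linarith) hsum M m
    have B := gconv hmono hconv (by linarith : (0:ℝ) ≤ 1 - t) ht0 (by ring) M m
    rw [← hx] at A
    rw [← hy] at B
    linarith

private lemma key {f : ℝ → ℝ} (hmono : Monotone f)
    (hconv : ConvexOn ℝ Set.univ f) {u v p q : ℝ} (huv : u ≤ v) (hpq : p ≤ q) :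
    f |u - p| + f |v - q| ≤ f |v - p| + f |u - q| := by
  have h := slide hmono hconv (m := u - q) (x := u - p) (M := v - p)
    (by linarith) (by linarith)
  have he : (u - q) + (v - p) - (u - p) = v - q := by ring
  rw [he] at h
  linarith

theorem uncross_swap_step {n : ℕ} (f : ℝ → ℝ) (hmono : Monotone f)
    (hconv : ConvexOn ℝ Set.univ f)
    (a b : Fin n → ℝ) (ha : Monotone a) (hb : Monotone b)
    (σ : Equiv.Perm (Fin n)) (hσ : σ ≠ 1)
    (i j : Fin n) (hij : i < j) (hinv : σ j < σ i) :
    ∑ k, f |a ((σ * Equiv.swap i j) k) - b k| ≤ ∑ k, f |a (σ k) - b k| := by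
  classical
  have hne : i ≠ j := ne_of_lt hij
  have split : ∀ c : Fin n → ℝ, ∑ k, c k
      = c i + (c j + ∑ k ∈ ((Finset.univ.erase i).erase j), c k) := by
    intro c
    rw [← Finset.add_sum_erase _ c (Finset.mem_univ i),
        ← Finset.add_sum_erase _ c (Finset.mem_erase.2 ⟨hne.symm, Finset.mem_univ j⟩)]
  rw [split, split (fun k => f |a (σ k) - b k|)]
  have hrest : ∑ k ∈ ((Finset.univ.erase i).erase j),
      f |a ((σ * Equiv.swap i j) k) - b k|
      = ∑ k ∈ ((Finset.univ.erase i).erase j), f |a (σ k) - b k| := by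
    apply Finset.sum_congr rfl
    intro k hk
    have hki : k ≠ i := Finset.ne_of_mem_erase (Finset.mem_of_mem_erase hk)
    have hkj : k ≠ j := Finset.ne_of_mem_erase hk
    rw [Equiv.Perm.mul_apply, Equiv.swap_apply_of_ne_of_ne hki hkj]
  rw [hrest]
  have h1 : (σ * Equiv.swap i j) i = σ j := by
    rw [Equiv.Perm.mul_apply, Equiv.swap_apply_left]
  have h2 : (σ * Equiv.swap i j) j = σ i := by
    rw [Equiv.Perm.mul_apply, Equiv.swap_apply_right]
  rw [h1, h2]
  have hk := key hmono hconv (ha hinv.le) (hb hij.le)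
  linarith
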